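/- An (n,k,δ) MDP convolutional code with n=5, k=3, δ=2 cannot have a column reduced generator matrix G(z) = G_0 + G_1 z with two columns of G_1 identically zero; consequently a column reduced generator matrix of such a code has column degrees (1,1,0). -/

import Mathlib

open Polynomial Finset

/-- Hamming weight of a vector: the number of nonzero components. -/
noncomputable def hammingWt {α ι : Type*} [Zero α] [Fintype ι] (v : ι → α) : ℕ :=
  Nat.card {i // v i ≠ 0}

/-- The `j`-th column distance of a set of polynomial vectors: the minimum over
codewords with nonzero constant coefficient vector of the total Hamming weight of
the coefficient vectors of `z^0, …, z^j`. -/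
noncomputable def colDist {F : Type*} [Field F] {ι : Type*} [Fintype ι]
    (S : Set (ι → F[X])) (j : ℕ) : ℕ :=
  sInf {d | ∃ v ∈ S, (∃ i, (v i).coeff 0 ≠ 0) ∧
    d = ∑ t ∈ range (j + 1), hammingWt fun i => (v i).coeff t}

/-- The degree of a polynomial generator matrix: the maximal degree of its
full-size (`k×k`) minors. -/
noncomputable def genDeg {F : Type*} [Field F] {n k : ℕ}
    (G : Matrix (Fin n) (Fin k) F[X]) : ℕ :=
  Finset.univ.sup fun f : Fin k ↪ Fin n => ((G.submatrix f id).det).natDegree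

/-- The largest degree of any entry of the `j`-th column of `G`. -/
noncomputable def colDeg {F : Type*} [Field F] {n k : ℕ}
    (G : Matrix (Fin n) (Fin k) F[X]) (j : Fin k) : ℕ :=
  Finset.univ.sup fun i => (G i j).natDegree

lemma hammingWt_le_four {F : Type*} [Zero F] (f : Fin 5 → F) (h0 : f 0 = 0) :
    hammingWt f ≤ 4 := by
  classical
  rw [hammingWt, Nat.card_eq_fintype_card, Fintype.card_subtype]
  have hsub : (univ.filter fun i => f i ≠ 0) ⊆ univ.erase 0 := by
    intro i hi
    simp only [mem_filter] at hi
    refine mem_erase.2 ⟨?_, mem_univ _⟩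
    rintro rfl; exact hi.2 h0
  calc (univ.filter fun i => f i ≠ 0).card ≤ (univ.erase (0 : Fin 5)).card :=
        Finset.card_le_card hsub
    _ = 4 := by simp

lemma hammingWt_zero_fun {F ι : Type*} [Zero F] [Fintype ι] :
    hammingWt (fun _ : ι => (0 : F)) = 0 := by
  simp [hammingWt]

/-- A `(5,3,2)` MDP convolutional code with column reduced generator matrix
`G(z) = G₀ + G₁ z` cannot have two columns of `G₁` identically zero; consequently
the column degrees of `G` are `1, 1, 0` (in some order). -/
theorem stmt19 (F : Type*) [Field F] [Fintype F]
    (C : Submodule F[X] (Fin 5 → F[X]))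
    (G : Matrix (Fin 5) (Fin 3) F[X])
    (hfull : LinearIndependent F[X] G.transpose)
    (hgen : C = Submodule.span F[X] (Set.range G.transpose))
    (hdeg1 : ∀ i j, (G i j).natDegree ≤ 1)  -- G(z) = G₀ + G₁ z
    (hδ : genDeg G = 2)
    (hred : ∑ j : Fin 3, colDeg G j = 2)  -- G is column reduced
    -- C is MDP: here L = ⌊2/3⌋ + ⌊2/2⌋ = 1
    (hMDP : ∀ j ≤ 1, colDist (C : Set (Fin 5 → F[X])) j = 2 * (j + 1) + 1) :
    (¬ ∃ j₁ j₂ : Fin 3, j₁ ≠ j₂ ∧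
        (∀ i, (G i j₁).coeff 1 = 0) ∧ (∀ i, (G i j₂).coeff 1 = 0)) ∧
    ∃ j₀ : Fin 3, colDeg G j₀ = 0 ∧ ∀ j ≠ j₀, colDeg G j = 1 := by
  classical
  constructor
  · rintro ⟨j₁, j₂, hne, h1, h2⟩
    -- columns j₁, j₂ are constant
    have hc : ∀ (j : Fin 3), (∀ i, (G i j).coeff 1 = 0) →
        ∀ i, G i j = Polynomial.C ((G i j).coeff 0) := by
      intro j hj i
      ext n
      match n with
      | 0 => simp
      | 1 => simp [hj i, Polynomial.coeff_C]
      | (n+2) =>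
        have hz : (G i j).coeff (n+2) = 0 :=
          coeff_eq_zero_of_natDegree_lt (lt_of_le_of_lt (hdeg1 i j) (by omega))
        simp [hz, Polynomial.coeff_C]
    obtain ⟨a, b, hab, hzero⟩ : ∃ a b : F, (a ≠ 0 ∨ b ≠ 0) ∧
        a * (G 0 j₁).coeff 0 + b * (G 0 j₂).coeff 0 = 0 := by
      by_cases h : (G 0 j₁).coeff 0 = 0
      · exact ⟨1, 0, Or.inl one_ne_zero, by simp [h]⟩
      · exact ⟨(G 0 j₂).coeff 0, -(G 0 j₁).coeff 0, Or.inr (neg_ne_zero.2 h), by ring⟩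
    set v : Fin 5 → F[X] := fun i => Polynomial.C a * G i j₁ + Polynomial.C b * G i j₂ with hv
    have hvi : ∀ i, v i = Polynomial.C (a * (G i j₁).coeff 0 + b * (G i j₂).coeff 0) := by
      intro i
      show Polynomial.C a * G i j₁ + Polynomial.C b * G i j₂ = _
      rw [hc j₁ h1 i, hc j₂ h2 i, ← Polynomial.C_mul, ← Polynomial.C_mul, ← Polynomial.C_add]
      simp
    have hvmem : v ∈ C := by
      rw [hgen]
      have m1 : G.transpose j₁ ∈ Submodule.span F[X] (Set.range G.transpose) :=
        Submodule.subset_span ⟨j₁, rfl⟩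
      have m2 : G.transpose j₂ ∈ Submodule.span F[X] (Set.range G.transpose) :=
        Submodule.subset_span ⟨j₂, rfl⟩
      have hmem := Submodule.add_mem _ (Submodule.smul_mem _ (Polynomial.C a) m1)
        (Submodule.smul_mem _ (Polynomial.C b) m2)
      exact hmem
    have hvne : ∃ i, (v i).coeff 0 ≠ 0 := by
      by_contra hall
      push_neg at hall
      have hall' : ∀ i, a * (G i j₁).coeff 0 + b * (G i j₂).coeff 0 = 0 := by
        intro i
        have hh := hall i
        rw [hvi i] at hh
        simpa using hh
      have hli := Fintype.linearIndependent_iff.1 hfull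
      set c : Fin 3 → F[X] :=
        fun j => if j = j₁ then Polynomial.C a else if j = j₂ then Polynomial.C b else 0 with hcdef
      have hsum : ∑ j, c j • G.transpose j =
          Polynomial.C a • G.transpose j₁ + Polynomial.C b • G.transpose j₂ := by
        have key : ∀ j, c j • G.transpose j =
            (if j = j₁ then Polynomial.C a • G.transpose j₁ else 0) +
            (if j = j₂ then Polynomial.C b • G.transpose j₂ else 0) := by
          intro j
          simp only [hcdef]
          by_cases hj1 : j = j₁
          · subst hj1
            simp [hne]
          · by_cases hj2 : j = j₂
            · subst hj2
              simp [hj1]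
            · simp [hj1, hj2]
        rw [Finset.sum_congr rfl (fun j _ => key j), Finset.sum_add_distrib]
        simp [Finset.sum_ite_eq']
      have hsum0 : ∑ j, c j • G.transpose j = 0 := by
        rw [hsum]
        funext i
        have he : Polynomial.C a * G i j₁ + Polynomial.C b * G i j₂ = 0 := by
          have := hvi i
          simp only [hv] at this
          rw [this, hall' i]
          simp
        simpa [Matrix.transpose_apply, Pi.add_apply, Pi.smul_apply, smul_eq_mul] using he
      have hz := hli c hsum0
      have ha : a = 0 := by
        have hj := hz j₁
        simp [hcdef] at hj
        exact hj
      have hb : b = 0 := by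
        have hj := hz j₂
        simp [hcdef, Ne.symm hne] at hj
        exact hj
      rcases hab with h | h
      · exact h ha
      · exact h hb
    -- the weight of v is at most 4
    have hco1 : (fun i => (v i).coeff 1) = fun _ => (0 : F) := by
      funext i
      rw [hvi i]
      simp [Polynomial.coeff_C]
    have hco0 : (v 0).coeff 0 = 0 := by
      rw [hvi 0]
      simpa [Polynomial.coeff_C] using hzero
    have hd : (∑ t ∈ range (1 + 1), hammingWt fun i => (v i).coeff t) ≤ 4 := by
      rw [Finset.sum_range_succ, Finset.sum_range_one, hco1, hammingWt_zero_fun]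
      simpa using hammingWt_le_four (fun i => (v i).coeff 0) hco0
    have hle : colDist (C : Set (Fin 5 → F[X])) 1 ≤
        ∑ t ∈ range (1 + 1), hammingWt fun i => (v i).coeff t :=
      Nat.sInf_le ⟨v, hvmem, hvne, rfl⟩
    have h5 : colDist (C : Set (Fin 5 → F[X])) 1 = 5 := by
      have := hMDP 1 le_rfl
      simpa using this
    omega
  · have hcol : ∀ j, colDeg G j ≤ 1 := fun j => Finset.sup_le fun i _ => hdeg1 i j
    rw [Fin.sum_univ_three] at hred
    have h0 := hcol 0
    have h1 := hcol 1
    have h2 := hcol 2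
    by_cases e0 : colDeg G 0 = 0
    · refine ⟨0, e0, fun j hj => ?_⟩
      fin_cases j
      · exact absurd rfl hj
      · show colDeg G 1 = 1; omega
      · show colDeg G 2 = 1; omega
    · by_cases e1 : colDeg G 1 = 0
      · refine ⟨1, e1, fun j hj => ?_⟩
        fin_cases j
        · show colDeg G 0 = 1; omega
        · exact absurd rfl hj
        · show colDeg G 2 = 1; omega
      · refine ⟨2, by omega, fun j hj => ?_⟩
        fin_cases j
        · show colDeg G 0 = 1; omega
        · show colDeg G 1 = 1; omega
        · exact absurd rfl hj
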